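/- Compact export for intuitionistic logic: for any finite set Re of atomic rules disjoint from the base B, Γ, Re ⊢_{IL∪B} A holds if and only if there is a finite Δ ⊆ B* such that Γ, Re*, Δ ⊢_IL A, where R* is the disjunction-free formula translating rule R. -/

import Mathlib

inductive PAtom : Type
  | bot
  | prop (n : ℕ)
deriving DecidableEq

inductive Formula : Type
  | atom (a : PAtom)
  | conj (f g : Formula)
  | disj (f g : Formula)
  | imp (f g : Formula)

/-- Atomic rules: `mk prems concl` is a rule with atomic conclusion `concl`,
whose premises are pairs (Reᵢ, Aᵢ) of a (finite) set of dischargeable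
lower-level rules Reᵢ and an atomic premise Aᵢ. A level-0 rule (an atom used
as an axiom) is `mk [] a`. -/
inductive ARule : Type
  | mk (prems : List (List ARule × PAtom)) (concl : PAtom)

mutual
  /-- The translation R* of an atomic rule into a disjunction-free formula:
  (⋀ᵢ (⋀_{ρ∈Reᵢ} ρ* → Aᵢ)) → A, with a level-0 rule translated to its atom. -/
  def ARule.star : ARule → Formula
    | ARule.mk [] a => Formula.atom a
    | ARule.mk (p :: ps) a => Formula.imp (premsConj p ps) (Formula.atom a)
  termination_by r => sizeOf r
  decreasing_by simp_wf <;> omega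
  /-- conjunction ⋀ᵢ (⋀_{ρ∈Reᵢ} ρ* → Aᵢ) over a nonempty list of premises -/
  def premsConj : (List ARule × PAtom) → List (List ARule × PAtom) → Formula
    | p, [] => premFormula p
    | p, q :: ps => Formula.conj (premFormula p) (premsConj q ps)
  termination_by p ps => 1 + sizeOf p + sizeOf ps
  decreasing_by all_goals (simp_wf <;> omega)
  /-- (⋀_{ρ∈Re} ρ* → A), which is just A when Re is empty -/
  def premFormula : (List ARule × PAtom) → Formula
    | ([], b) => Formula.atom b
    | (r :: rs, b) => Formula.imp (rulesConj r rs) (Formula.atom b)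
  termination_by p => sizeOf p
  decreasing_by simp_wf <;> omega
  /-- conjunction ⋀_{ρ∈Re} ρ* over a nonempty list of rules -/
  def rulesConj : ARule → List ARule → Formula
    | r, [] => r.star
    | r, s :: rs => Formula.conj r.star (rulesConj s rs)
  termination_by r rs => 1 + sizeOf r + sizeOf rs
  decreasing_by all_goals (simp_wf <;> omega)
end

/-- Natural deduction for intuitionistic propositional logic extended with a
set R of atomic rules (which may be discharged/assumed): `Der R Γ A` means A
is derivable from assumptions Γ using the rules of IL and the atomic rules
in R (applications of a higher-level atomic rule may discharge its
premise-rules). -/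
inductive Der : Set ARule → Set Formula → Formula → Prop
  | hyp {R Γ A} : A ∈ Γ → Der R Γ A
  | arule {R Γ} (prems : List (List ARule × PAtom)) (a : PAtom) :
      ARule.mk prems a ∈ R →
      (∀ p ∈ prems, Der (R ∪ {r | r ∈ p.1}) Γ (Formula.atom p.2)) →
      Der R Γ (Formula.atom a)
  | andI {R Γ f g} : Der R Γ f → Der R Γ g → Der R Γ (Formula.conj f g)
  | andE1 {R Γ f g} : Der R Γ (Formula.conj f g) → Der R Γ f
  | andE2 {R Γ f g} : Der R Γ (Formula.conj f g) → Der R Γ g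
  | orI1 {R Γ f g} : Der R Γ f → Der R Γ (Formula.disj f g)
  | orI2 {R Γ f g} : Der R Γ g → Der R Γ (Formula.disj f g)
  | orE {R Γ f g A} : Der R Γ (Formula.disj f g) →
      Der R (insert f Γ) A → Der R (insert g Γ) A → Der R Γ A
  | impI {R Γ f g} : Der R (insert f Γ) g → Der R Γ (Formula.imp f g)
  | impE {R Γ f g} : Der R Γ (Formula.imp f g) → Der R Γ f → Der R Γ g
  | botE {R Γ A} : Der R Γ (Formula.atom PAtom.bot) → Der R Γ A

theorem der_mono {R Γ A} (h : Der R Γ A) :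
    ∀ R' Γ', R ⊆ R' → Γ ⊆ Γ' → Der R' Γ' A := by
  induction h with
  | hyp hA => exact fun R' Γ' _ hΓ => Der.hyp (hΓ hA)
  | arule prems a hmem hp ih =>
      intro R' Γ' hR hΓ
      exact Der.arule prems a (hR hmem)
        (fun p hp' => ih p hp' (R' ∪ {r | r ∈ p.1}) Γ'
          (Set.union_subset_union_left _ hR) hΓ)
  | andI h1 h2 ih1 ih2 => exact fun R' Γ' hR hΓ => Der.andI (ih1 R' Γ' hR hΓ) (ih2 R' Γ' hR hΓ)
  | andE1 h ih => exact fun R' Γ' hR hΓ => Der.andE1 (ih R' Γ' hR hΓ)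
  | andE2 h ih => exact fun R' Γ' hR hΓ => Der.andE2 (ih R' Γ' hR hΓ)
  | orI1 h ih => exact fun R' Γ' hR hΓ => Der.orI1 (ih R' Γ' hR hΓ)
  | orI2 h ih => exact fun R' Γ' hR hΓ => Der.orI2 (ih R' Γ' hR hΓ)
  | orE h h1 h2 ih ih1 ih2 =>
      intro R' Γ' hR hΓ
      exact Der.orE (ih R' Γ' hR hΓ)
        (ih1 R' _ hR (Set.insert_subset_insert hΓ))
        (ih2 R' _ hR (Set.insert_subset_insert hΓ))
  | impI h ih =>
      intro R' Γ' hR hΓ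
      exact Der.impI (ih R' _ hR (Set.insert_subset_insert hΓ))
  | impE h1 h2 ih1 ih2 => exact fun R' Γ' hR hΓ => Der.impE (ih1 R' Γ' hR hΓ) (ih2 R' Γ' hR hΓ)
  | botE h ih => exact fun R' Γ' hR hΓ => Der.botE (ih R' Γ' hR hΓ)

theorem der_cut {R Γ' A} (h : Der R Γ' A) :
    ∀ Γ, (∀ B ∈ Γ', Der R Γ B) → Der R Γ A := by
  induction h with
  | hyp hA => exact fun Γ hder => hder _ hA
  | arule prems a hmem hp ih =>
      intro Γ hder
      exact Der.arule prems a hmem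
        (fun p hp' => ih p hp' Γ
          (fun B hB => der_mono (hder B hB) _ _ Set.subset_union_left (le_refl _)))
  | andI h1 h2 ih1 ih2 => exact fun Γ hder => Der.andI (ih1 Γ hder) (ih2 Γ hder)
  | andE1 h ih => exact fun Γ hder => Der.andE1 (ih Γ hder)
  | andE2 h ih => exact fun Γ hder => Der.andE2 (ih Γ hder)
  | orI1 h ih => exact fun Γ hder => Der.orI1 (ih Γ hder)
  | orI2 h ih => exact fun Γ hder => Der.orI2 (ih Γ hder)
  | orE h h1 h2 ih ih1 ih2 =>
      intro Γ hder
      refine Der.orE (ih Γ hder) (ih1 _ ?_) (ih2 _ ?_) <;>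
        · intro B hB
          rcases hB with rfl | hB
          · exact Der.hyp (Set.mem_insert _ _)
          · exact der_mono (hder B hB) _ _ (le_refl _) (Set.subset_insert _ _)
  | impI h ih =>
      intro Γ hder
      refine Der.impI (ih _ ?_)
      intro B hB
      rcases hB with rfl | hB
      · exact Der.hyp (Set.mem_insert _ _)
      · exact der_mono (hder B hB) _ _ (le_refl _) (Set.subset_insert _ _)
  | impE h1 h2 ih1 ih2 => exact fun Γ hder => Der.impE (ih1 Γ hder) (ih2 Γ hder)
  | botE h ih => exact fun Γ hder => Der.botE (ih Γ hder)

theorem premsConj_proj {R Γ} : ∀ p ps, Der R Γ (premsConj p ps) →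
    ∀ q, q = p ∨ q ∈ ps → Der R Γ (premFormula q) := by
  intro p ps
  induction ps generalizing p with
  | nil =>
      intro h q hq
      rcases hq with rfl | hq
      · rw [premsConj] at h; exact h
      · simp at hq
  | cons q' ps' ih =>
      intro h q hq
      rw [premsConj] at h
      rcases hq with rfl | hq
      · exact Der.andE1 h
      · exact ih q' (Der.andE2 h) q (by simpa using hq)

theorem premsConj_intro {R Γ} : ∀ p ps,
    (∀ q, q = p ∨ q ∈ ps → Der R Γ (premFormula q)) → Der R Γ (premsConj p ps) := by
  intro p ps
  induction ps generalizing p with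
  | nil => intro h; rw [premsConj]; exact h p (Or.inl rfl)
  | cons q' ps' ih =>
      intro h
      rw [premsConj]
      exact Der.andI (h p (Or.inl rfl))
        (ih q' (fun q hq => h q (Or.inr (by rcases hq with h1 | h1 <;> simp [h1]))))

theorem rulesConj_proj {R Γ} : ∀ r rs, Der R Γ (rulesConj r rs) →
    ∀ s, s = r ∨ s ∈ rs → Der R Γ s.star := by
  intro r rs
  induction rs generalizing r with
  | nil =>
      intro h s hs
      rcases hs with rfl | hs
      · rw [rulesConj] at h; exact h
      · simp at hs
  | cons s' rs' ih =>
      intro h s hs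
      rw [rulesConj] at h
      rcases hs with rfl | hs
      · exact Der.andE1 h
      · exact ih s' (Der.andE2 h) s (by simpa using hs)

mutual
theorem star_der : ∀ (ρ : ARule) (R : Set ARule) (Γ : Set Formula), ρ ∈ R → Der R Γ ρ.star
  | ARule.mk [] a, R, Γ, h => by
      rw [ARule.star]
      exact Der.arule [] a h (by simp)
  | ARule.mk (p :: ps) a, R, Γ, h => by
      rw [ARule.star]
      refine Der.impI ?_
      refine Der.arule (p :: ps) a h ?_
      intro q hq
      have hq' : q = p ∨ q ∈ ps := by simpa using hq
      have hpc : Der (R ∪ {r | r ∈ q.1}) (insert (premsConj p ps) Γ) (premsConj p ps) :=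
        Der.hyp (Set.mem_insert _ _)
      have hpf := premsConj_proj p ps hpc q hq'
      have hsz : sizeOf q < sizeOf (ARule.mk (p :: ps) a) := by
        have := List.sizeOf_lt_of_mem hq
        simp only [ARule.mk.sizeOf_spec]; omega
      exact prem_der q _ _ (fun r hr => Or.inr hr) hpf
  termination_by ρ => sizeOf ρ

theorem prem_der : ∀ (q : List ARule × PAtom) (R : Set ARule) (Γ : Set Formula),
    (∀ r ∈ q.1, r ∈ R) → Der R Γ (premFormula q) → Der R Γ (Formula.atom q.2)
  | ([], b), R, Γ, _, hpf => by rw [premFormula] at hpf; exact hpf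
  | (r :: rs, b), R, Γ, hsub, hpf => by
      rw [premFormula] at hpf
      exact Der.impE hpf (rulesConj_der r rs R Γ (fun s hs => hsub s hs))
  termination_by q => sizeOf q

theorem rulesConj_der : ∀ (r : ARule) (rs : List ARule) (R : Set ARule) (Γ : Set Formula),
    (∀ s ∈ (r :: rs : List ARule), s ∈ R) → Der R Γ (rulesConj r rs)
  | r, [], R, Γ, h => by rw [rulesConj]; exact star_der r R Γ (h r (by simp))
  | r, s :: rs, R, Γ, h => by
      rw [rulesConj]
      exact Der.andI (star_der r R Γ (h r (by simp)))
        (rulesConj_der s rs R Γ (fun t ht => h t (by simpa using Or.inr (by simpa using ht))))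
  termination_by r rs => 1 + sizeOf r + sizeOf rs
end

theorem der_export {R Γ A} (h : Der R Γ A) :
    ∃ Δ : Set Formula, Δ ⊆ ARule.star '' R ∧ Δ.Finite ∧ Der ∅ (Γ ∪ Δ) A := by
  induction h with
  | hyp hA => exact ⟨∅, by simp, Set.finite_empty, Der.hyp (Set.mem_union_left _ hA)⟩
  | arule prems a hmem hp ih =>
      rename_i R0 Γ0
      choose! Δf hsub hfin hder using ih
      classical
      refine ⟨insert ((ARule.mk prems a).star)
        (⋃ p ∈ {p | p ∈ prems}, (Δf p \ ARule.star '' {r | r ∈ p.1})), ?_, ?_, ?_⟩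
      · intro B hB
        rcases hB with rfl | hB
        · exact Set.mem_image_of_mem _ hmem
        · simp only [Set.mem_iUnion] at hB
          obtain ⟨p, hp, hBp, hBn⟩ := hB
          have := hsub p hp hBp
          rw [Set.image_union] at this
          rcases this with h1 | h1
          · exact h1
          · exact absurd h1 hBn
      · refine Set.Finite.insert _ (Set.Finite.biUnion (List.finite_toSet prems) ?_)
        exact fun p hp => (hfin p hp).diff
      · -- derivation of atom a
        have key : ∀ p ∈ prems, Der ∅ (Γ0 ∪ insert ((ARule.mk prems a).star)
            (⋃ p ∈ {p | p ∈ prems}, (Δf p \ ARule.star '' {r | r ∈ p.1})))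
            (premFormula p) := by
          intro p hp
          have hmemS : ∀ B ∈ Δf p, B ∉ ARule.star '' {r | r ∈ p.1} →
              B ∈ Γ0 ∪ insert ((ARule.mk prems a).star)
                (⋃ p ∈ {p | p ∈ prems}, (Δf p \ ARule.star '' {r | r ∈ p.1})) := by
            intro B hB hBn
            refine Set.mem_union_right _ (Set.mem_insert_of_mem _ ?_)
            simp only [Set.mem_iUnion]
            exact ⟨p, hp, hB, hBn⟩
          obtain ⟨l, b⟩ := p
          cases l with
          | nil =>
              rw [premFormula]
              refine der_cut (hder _ hp) _ ?_
              intro B hB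
              rcases hB with hB | hB
              · exact Der.hyp (Set.mem_union_left _ hB)
              · refine Der.hyp (hmemS B hB ?_)
                simp
          | cons r rs =>
              rw [premFormula]
              refine Der.impI ?_
              refine der_cut (hder _ hp) _ ?_
              intro B hB
              rcases hB with hB | hB
              · exact Der.hyp (Set.mem_insert_of_mem _ (Set.mem_union_left _ hB))
              · by_cases hB' : B ∈ ARule.star '' {r' | r' ∈ ((r :: rs, b) : List ARule × PAtom).1}
                · obtain ⟨s, hs, rfl⟩ := hB'
                  exact rulesConj_proj r rs (Der.hyp (Set.mem_insert _ _)) s (by simpa using hs)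
                · exact Der.hyp (Set.mem_insert_of_mem _ (hmemS B hB hB'))
        cases prems with
        | nil =>
            have : (ARule.mk ([] : List (List ARule × PAtom)) a).star = Formula.atom a := by
              rw [ARule.star]
            rw [← this]
            exact Der.hyp (Set.mem_union_right _ (Set.mem_insert _ _))
        | cons p ps =>
            have hstar : (ARule.mk (p :: ps) a).star
                = Formula.imp (premsConj p ps) (Formula.atom a) := by rw [ARule.star]
            refine Der.impE (f := premsConj p ps) ?_ ?_
            · rw [← hstar]
              exact Der.hyp (Set.mem_union_right _ (Set.mem_insert _ _))
            · exact premsConj_intro p ps (fun q hq => key q (by simpa using hq))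
  | andI h1 h2 ih1 ih2 =>
      obtain ⟨Δ1, hs1, hf1, hd1⟩ := ih1
      obtain ⟨Δ2, hs2, hf2, hd2⟩ := ih2
      refine ⟨Δ1 ∪ Δ2, Set.union_subset hs1 hs2, hf1.union hf2, ?_⟩
      exact Der.andI
        (der_mono hd1 _ _ (le_refl _) (Set.union_subset_union_right _ Set.subset_union_left))
        (der_mono hd2 _ _ (le_refl _) (Set.union_subset_union_right _ Set.subset_union_right))
  | andE1 h ih =>
      obtain ⟨Δ, hs, hf, hd⟩ := ih; exact ⟨Δ, hs, hf, Der.andE1 hd⟩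
  | andE2 h ih =>
      obtain ⟨Δ, hs, hf, hd⟩ := ih; exact ⟨Δ, hs, hf, Der.andE2 hd⟩
  | orI1 h ih =>
      obtain ⟨Δ, hs, hf, hd⟩ := ih; exact ⟨Δ, hs, hf, Der.orI1 hd⟩
  | orI2 h ih =>
      obtain ⟨Δ, hs, hf, hd⟩ := ih; exact ⟨Δ, hs, hf, Der.orI2 hd⟩
  | orE h h1 h2 ih ih1 ih2 =>
      obtain ⟨Δ, hs, hf, hd⟩ := ih
      obtain ⟨Δ1, hs1, hf1, hd1⟩ := ih1
      obtain ⟨Δ2, hs2, hf2, hd2⟩ := ih2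
      refine ⟨Δ ∪ Δ1 ∪ Δ2, Set.union_subset (Set.union_subset hs hs1) hs2,
        (hf.union hf1).union hf2, ?_⟩
      refine Der.orE (der_mono hd _ _ (le_refl _) ?_)
        (der_mono hd1 _ _ (le_refl _) ?_) (der_mono hd2 _ _ (le_refl _) ?_)
      · exact Set.union_subset_union_right _
          (Set.subset_union_left.trans Set.subset_union_left)
      · intro x hx; rcases hx with (rfl | hx) | hx
        · exact Set.mem_insert _ _
        · exact Set.mem_insert_of_mem _ (Set.mem_union_left _ hx)
        · exact Set.mem_insert_of_mem _ (Set.mem_union_right _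
            (Set.mem_union_left _ (Set.mem_union_right _ hx)))
      · intro x hx; rcases hx with (rfl | hx) | hx
        · exact Set.mem_insert _ _
        · exact Set.mem_insert_of_mem _ (Set.mem_union_left _ hx)
        · exact Set.mem_insert_of_mem _ (Set.mem_union_right _ (Set.mem_union_right _ hx))
  | impI h ih =>
      obtain ⟨Δ, hs, hf, hd⟩ := ih
      refine ⟨Δ, hs, hf, Der.impI (der_mono hd _ _ (le_refl _) ?_)⟩
      intro x hx; rcases hx with (rfl | hx) | hx
      · exact Set.mem_insert _ _
      · exact Set.mem_insert_of_mem _ (Set.mem_union_left _ hx)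
      · exact Set.mem_insert_of_mem _ (Set.mem_union_right _ hx)
  | impE h1 h2 ih1 ih2 =>
      obtain ⟨Δ1, hs1, hf1, hd1⟩ := ih1
      obtain ⟨Δ2, hs2, hf2, hd2⟩ := ih2
      refine ⟨Δ1 ∪ Δ2, Set.union_subset hs1 hs2, hf1.union hf2, ?_⟩
      exact Der.impE
        (der_mono hd1 _ _ (le_refl _) (Set.union_subset_union_right _ Set.subset_union_left))
        (der_mono hd2 _ _ (le_refl _) (Set.union_subset_union_right _ Set.subset_union_right))
  | botE h ih =>
      obtain ⟨Δ, hs, hf, hd⟩ := ih; exact ⟨Δ, hs, hf, Der.botE hd⟩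


/-- compact export for intuitionistic logic: for any finite
set Re of atomic rules disjoint from the base B, Γ, Re ⊢_{IL∪B} A iff there
is a finite Δ ⊆ B* with Γ, Re*, Δ ⊢_IL A. -/
theorem stmt_17 (B Re : Set ARule) (hReFin : Re.Finite) (hdisj : Disjoint Re B)
    (Γ : Set Formula) (A : Formula) :
    Der (B ∪ Re) Γ A ↔
      ∃ Δ : Set Formula, Δ ⊆ ARule.star '' B ∧ Δ.Finite ∧
        Der ∅ (Γ ∪ ARule.star '' Re ∪ Δ) A := by
  constructor
  · intro h
    obtain ⟨Δ0, hs, hf, hd⟩ := der_export h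
    classical
    refine ⟨Δ0 \ ARule.star '' Re, ?_, hf.diff, ?_⟩
    · intro x hx
      have := hs hx.1
      rw [Set.image_union] at this
      rcases this with h1 | h1
      · exact h1
      · exact absurd h1 hx.2
    · refine der_mono hd _ _ (le_refl _) ?_
      intro x hx
      rcases hx with hx | hx
      · exact Set.mem_union_left _ (Set.mem_union_left _ hx)
      · by_cases hx' : x ∈ ARule.star '' Re
        · exact Set.mem_union_left _ (Set.mem_union_right _ hx')
        · exact Set.mem_union_right _ ⟨hx, hx'⟩
  · rintro ⟨Δ, hs, hf, hd⟩
    have hd' : Der (B ∪ Re) (Γ ∪ ARule.star '' Re ∪ Δ) A :=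
      der_mono hd _ _ (Set.empty_subset _) (le_refl _)
    refine der_cut hd' Γ ?_
    intro s hsmem
    rcases hsmem with (hsmem | hsmem) | hsmem
    · exact Der.hyp hsmem
    · obtain ⟨ρ, hρ, rfl⟩ := hsmem
      exact star_der ρ _ Γ (Set.mem_union_right _ hρ)
    · obtain ⟨ρ, hρ, rfl⟩ := hs hsmem
      exact star_der ρ _ Γ (Set.mem_union_left _ hρ)
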